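/- arXiv:2005.14632 — 3 statements merged into one kernel-verified Lean document; each statement's English description precedes it below -/
import Mathlib

section
/- Fix ε > 0. For every θ ∈ (-π, π], the set {σ ∈ (1, 1 + ε) : Arg(ζ_{π/2}(σ)) = θ} is infinite; in other words, the curve traced by ζ_{π/2}(σ) for σ ∈ (1, 1 + ε) attains every prescribed principal argument infinitely many times. -/
open Real

/-- `ζ_{π/2}(σ) = ∏_{p prime} (1 - i·p^{-σ})⁻¹` for real `σ > 1`. -/
noncomputable def zetaPiHalf (σ : ℝ) : ℂ :=
  ∏' p : Nat.Primes, (1 - Complex.I * (p : ℂ) ^ (-σ : ℂ))⁻¹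

namespace ZPH

lemma cast_eq (σ : ℝ) (p : Nat.Primes) :
    (p : ℂ) ^ (-σ : ℂ) = (((p : ℝ) ^ (-σ) : ℝ) : ℂ) := by
  rw [Complex.ofReal_cpow (by positivity) (-σ)]
  norm_cast

lemma two_le (p : Nat.Primes) : (2 : ℝ) ≤ (p : ℝ) := by exact_mod_cast p.2.two_le

lemma x_pos (σ : ℝ) (p : Nat.Primes) : 0 < (p : ℝ) ^ (-σ) :=
  Real.rpow_pos_of_pos (by linarith [two_le p]) _

lemma x_le_half {σ : ℝ} (hσ : 1 ≤ σ) (p : Nat.Primes) : (p : ℝ) ^ (-σ) ≤ 1 / 2 := by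
  have h2 := two_le p
  have h1 : (p : ℝ) ^ (-σ) ≤ (p : ℝ) ^ (-1 : ℝ) :=
    Real.rpow_le_rpow_of_exponent_le (by linarith) (by linarith)
  rw [Real.rpow_neg_one] at h1
  have h3 : (p : ℝ)⁻¹ ≤ (2 : ℝ)⁻¹ := by
    apply inv_anti₀ (by norm_num) h2
  calc (p : ℝ) ^ (-σ) ≤ (p : ℝ)⁻¹ := h1
    _ ≤ (2 : ℝ)⁻¹ := h3
    _ = 1 / 2 := by norm_num

lemma z_ne (t : ℝ) : (1 - Complex.I * (t : ℂ)) ≠ 0 := by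
  intro h
  have := congrArg Complex.re h
  simp [Complex.ext_iff] at this

lemma arctan_mem (t : ℝ) : -Real.arctan t ∈ Set.Ioc (-π) π := by
  have h1 := Real.arctan_lt_pi_div_two t
  have h2 := Real.neg_pi_div_two_lt_arctan t
  have hπ := Real.pi_pos
  constructor <;> [skip; skip] <;> linarith

lemma arg_z (t : ℝ) : (1 - Complex.I * (t : ℂ)).arg = -Real.arctan t := by
  have h0 : (0 : ℝ) < Real.sqrt (1 + t ^ 2) := Real.sqrt_pos.mpr (by positivity)
  have key : (1 - Complex.I * (t : ℂ)) =
      (Real.sqrt (1 + t ^ 2) : ℂ) *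
        ((Real.cos (-Real.arctan t) : ℂ) + (Real.sin (-Real.arctan t) : ℂ) * Complex.I) := by
    rw [Real.cos_neg, Real.sin_neg, Real.cos_arctan, Real.sin_arctan]
    apply Complex.ext <;> simp <;> field_simp
  rw [key, Complex.arg_real_mul _ h0, Complex.ofReal_cos, Complex.ofReal_sin,
    Complex.arg_cos_add_sin_mul_I (arctan_mem t)]

lemma arg_z_ne_pi (t : ℝ) : (1 - Complex.I * (t : ℂ)).arg ≠ π := by
  rw [arg_z]
  intro h
  have h2 : Real.arctan t = -π := by linarith
  linarith [Real.neg_pi_div_two_lt_arctan t, Real.pi_pos]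

lemma log_inv_z (t : ℝ) :
    Complex.log (1 - Complex.I * (t : ℂ))⁻¹ = -Complex.log (1 - Complex.I * (t : ℂ)) :=
  Complex.log_inv _ (arg_z_ne_pi t)

lemma im_log_inv_z (t : ℝ) :
    (Complex.log (1 - Complex.I * (t : ℂ))⁻¹).im = Real.arctan t := by
  rw [log_inv_z, Complex.neg_im, Complex.log_im, arg_z, neg_neg]

lemma norm_log_z_le {t : ℝ} (h0 : 0 ≤ t) (h : t ≤ 1 / 2) :
    ‖Complex.log (1 - Complex.I * (t : ℂ))‖ ≤ 3 / 2 * t := by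
  have hre : (1 - Complex.I * (t : ℂ)) = 1 + (-(Complex.I * (t : ℂ))) := by ring
  have hn : ‖-(Complex.I * (t : ℂ))‖ = t := by
    rw [norm_neg, norm_mul, Complex.norm_I, one_mul, Complex.norm_real, Real.norm_eq_abs,
      abs_of_nonneg h0]
  rw [hre]
  calc ‖Complex.log (1 + -(Complex.I * (t : ℂ)))‖
      ≤ 3 / 2 * ‖-(Complex.I * (t : ℂ))‖ :=
        Complex.norm_log_one_add_half_le_self (by rw [hn]; exact h)
    _ = 3 / 2 * t := by rw [hn]

lemma summable_x {σ : ℝ} (hσ : 1 < σ) : Summable (fun p : Nat.Primes => (p : ℝ) ^ (-σ)) :=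
  Nat.Primes.summable_rpow.mpr (by linarith)

lemma summable_log {σ : ℝ} (hσ : 1 < σ) :
    Summable (fun p : Nat.Primes =>
      Complex.log (1 - Complex.I * (((p : ℝ) ^ (-σ) : ℝ) : ℂ))⁻¹) := by
  apply Summable.of_norm_bounded ((summable_x hσ).mul_left (3 / 2))
  intro p
  rw [log_inv_z, norm_neg]
  exact norm_log_z_le (x_pos σ p).le (x_le_half hσ.le p)

/-- The unwrapped argument function. -/
noncomputable def G (σ : ℝ) : ℝ := ∑' p : Nat.Primes, Real.arctan ((p : ℝ) ^ (-σ))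

lemma arctan_nonneg' {t : ℝ} (h : 0 ≤ t) : 0 ≤ Real.arctan t := by
  have := Real.arctan_strictMono.monotone h
  rwa [Real.arctan_zero] at this

lemma arctan_le_self' {t : ℝ} (h : 0 ≤ t) : Real.arctan t ≤ t := by
  have h1 := arctan_nonneg' h
  have h2 := Real.arctan_lt_pi_div_two t
  calc Real.arctan t ≤ Real.tan (Real.arctan t) := Real.le_tan h1 h2
    _ = t := Real.tan_arctan t

lemma summable_arctan {σ : ℝ} (hσ : 1 < σ) :
    Summable (fun p : Nat.Primes => Real.arctan ((p : ℝ) ^ (-σ))) := by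
  apply Summable.of_nonneg_of_le (fun p => arctan_nonneg' (x_pos σ p).le)
    (fun p => arctan_le_self' (x_pos σ p).le) (summable_x hσ)

lemma zeta_eq_exp {σ : ℝ} (hσ : 1 < σ) :
    zetaPiHalf σ = Complex.exp (∑' p : Nat.Primes,
      Complex.log (1 - Complex.I * (((p : ℝ) ^ (-σ) : ℝ) : ℂ))⁻¹) := by
  have hs := summable_log hσ
  have hp := hs.hasSum.cexp
  have heq : (Complex.exp ∘ fun p : Nat.Primes =>
      Complex.log (1 - Complex.I * (((p : ℝ) ^ (-σ) : ℝ) : ℂ))⁻¹) =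
      fun p : Nat.Primes => (1 - Complex.I * (((p : ℝ) ^ (-σ) : ℝ) : ℂ))⁻¹ :=
    funext fun p => Complex.exp_log (inv_ne_zero (z_ne _))
  rw [heq] at hp
  have h2 : (fun p : Nat.Primes => (1 - Complex.I * (p : ℂ) ^ (-σ : ℂ))⁻¹) =
      fun p : Nat.Primes => (1 - Complex.I * (((p : ℝ) ^ (-σ) : ℝ) : ℂ))⁻¹ :=
    funext fun p => by rw [cast_eq]
  rw [zetaPiHalf, h2, hp.tprod_eq]

lemma im_tsum {σ : ℝ} (hσ : 1 < σ) :
    (∑' p : Nat.Primes,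
      Complex.log (1 - Complex.I * (((p : ℝ) ^ (-σ) : ℝ) : ℂ))⁻¹).im = G σ := by
  have hs := summable_log hσ
  have him := Complex.imCLM.hasSum hs.hasSum
  have h2 : HasSum (fun p : Nat.Primes => Real.arctan ((p : ℝ) ^ (-σ)))
      ((∑' p : Nat.Primes,
        Complex.log (1 - Complex.I * (((p : ℝ) ^ (-σ) : ℝ) : ℂ))⁻¹).im) := by
    refine him.congr_fun fun p => ?_
    exact (im_log_inv_z ((p : ℝ) ^ (-σ))).symm
  exact h2.tsum_eq.symm

lemma arg_zeta {σ θ : ℝ} (hσ : 1 < σ) (hθ : θ ∈ Set.Ioc (-π) π) {n : ℤ}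
    (hg : G σ = θ + n * (2 * π)) : (zetaPiHalf σ).arg = θ := by
  rw [zeta_eq_exp hσ]
  set S := ∑' p : Nat.Primes,
    Complex.log (1 - Complex.I * (((p : ℝ) ^ (-σ) : ℝ) : ℂ))⁻¹ with hS
  have him : S.im = θ + n * (2 * π) := by rw [im_tsum hσ]; exact hg
  have hsplit : Complex.exp S =
      (Real.exp S.re : ℂ) * Complex.exp ((S.im : ℂ) * Complex.I) := by
    rw [Complex.ofReal_exp, ← Complex.exp_add, Complex.re_add_im]
  rw [hsplit, Complex.arg_real_mul _ (Real.exp_pos _), Complex.arg_exp_mul_I, him]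
  have h1 : θ + n * (2 * π) = θ + n • (2 * π) := by rw [zsmul_eq_mul]
  rw [h1, toIocMod_add_zsmul, toIocMod_eq_self]
  constructor
  · exact hθ.1
  · linarith [hθ.2]

lemma contG {a : ℝ} (ha : 1 < a) : ContinuousOn G (Set.Ici a) := by
  apply continuousOn_tsum (u := fun p : Nat.Primes => (p : ℝ) ^ (-a))
  · intro p
    apply Continuous.continuousOn
    have hp0 : (0 : ℝ) < (p : ℝ) := by linarith [two_le p]
    have heq : (fun σ : ℝ => Real.arctan ((p : ℝ) ^ (-σ))) =
        fun σ : ℝ => Real.arctan (Real.exp (Real.log (p : ℝ) * (-σ))) := by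
      funext σ
      rw [Real.rpow_def_of_pos hp0]
    rw [heq]
    exact Real.continuous_arctan.comp (Real.continuous_exp.comp (continuous_const.mul
      continuous_neg))
  · exact summable_x ha
  · intro p σ hσ
    rw [Real.norm_eq_abs, abs_of_nonneg (arctan_nonneg' (x_pos σ p).le)]
    calc Real.arctan ((p : ℝ) ^ (-σ)) ≤ (p : ℝ) ^ (-σ) := arctan_le_self' (x_pos σ p).le
      _ ≤ (p : ℝ) ^ (-a) := Real.rpow_le_rpow_of_exponent_le (by linarith [two_le p])
          (by simpa using hσ)

lemma half_le_arctan {t : ℝ} (h0 : 0 ≤ t) (h1 : t ≤ 1) : t / 2 ≤ Real.arctan t := by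
  have hmono : MonotoneOn (fun s : ℝ => Real.arctan s - s / 2) (Set.Icc 0 1) := by
    apply monotoneOn_of_deriv_nonneg (convex_Icc 0 1)
    · exact (Real.continuous_arctan.sub (continuous_id.div_const 2)).continuousOn
    · intro s _
      exact ((Real.hasDerivAt_arctan s).sub ((hasDerivAt_id s).div_const 2)).differentiableAt
        |>.differentiableWithinAt
    · intro s hs
      rw [interior_Icc] at hs
      have hder : HasDerivAt (fun u : ℝ => Real.arctan u - u / 2)
          (1 / (1 + s ^ 2) - 1 / 2) s := by
        exact (Real.hasDerivAt_arctan s).sub ((hasDerivAt_id s).div_const 2)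
      rw [hder.deriv]
      have hs2 : s ^ 2 ≤ 1 := by nlinarith [hs.1.le, hs.2.le]
      have hpos : (0 : ℝ) < 1 + s ^ 2 := by positivity
      rw [sub_nonneg, div_le_div_iff₀ (by norm_num) hpos]
      linarith
  have := hmono (Set.left_mem_Icc.mpr zero_le_one) ⟨h0, h1⟩ h0
  simp only [Real.arctan_zero] at this
  linarith

lemma not_summable_arctan_inv :
    ¬ Summable (fun p : Nat.Primes => Real.arctan ((p : ℝ)⁻¹)) := by
  intro h
  apply Nat.Primes.not_summable_one_div
  have hb : ∀ p : Nat.Primes, (1 / (p : ℝ)) / 2 ≤ Real.arctan ((p : ℝ)⁻¹) := by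
    intro p
    have h2 := two_le p
    have hp0 : (0 : ℝ) < (p : ℝ) := by linarith
    have hle : (p : ℝ)⁻¹ ≤ 1 := by
      rw [inv_le_one_iff₀]; right; linarith
    have := half_le_arctan (by positivity : (0:ℝ) ≤ (p : ℝ)⁻¹) hle
    rwa [one_div]
  have hsum : Summable (fun p : Nat.Primes => (1 / (p : ℝ)) / 2) :=
    Summable.of_nonneg_of_le (fun p => by positivity) hb h
  have := hsum.mul_right 2
  refine this.congr fun p => ?_
  ring

lemma tendsto_G : Filter.Tendsto G (nhdsWithin 1 (Set.Ioi 1)) Filter.atTop := by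
  rw [Filter.tendsto_atTop]
  intro M
  obtain ⟨F, hF⟩ : ∃ F : Finset Nat.Primes,
      M + 1 < ∑ p ∈ F, Real.arctan ((p : ℝ)⁻¹) := by
    by_contra hcon
    push_neg at hcon
    exact not_summable_arctan_inv
      (summable_of_sum_le (fun p => arctan_nonneg' (by positivity)) hcon)
  have hcont : ContinuousWithinAt (fun σ : ℝ => ∑ p ∈ F, Real.arctan ((p : ℝ) ^ (-σ)))
      (Set.Ioi 1) 1 := by
    apply Continuous.continuousWithinAt
    apply continuous_finset_sum
    intro p _
    have hp0 : (0 : ℝ) < (p : ℝ) := by linarith [two_le p]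
    have heq : (fun σ : ℝ => Real.arctan ((p : ℝ) ^ (-σ))) =
        fun σ : ℝ => Real.arctan (Real.exp (Real.log (p : ℝ) * (-σ))) := by
      funext σ
      rw [Real.rpow_def_of_pos hp0]
    rw [heq]
    exact Real.continuous_arctan.comp (Real.continuous_exp.comp (continuous_const.mul
      continuous_neg))
  have hval : ∑ p ∈ F, Real.arctan ((p : ℝ) ^ (-(1:ℝ))) = ∑ p ∈ F, Real.arctan ((p : ℝ)⁻¹) := by
    apply Finset.sum_congr rfl
    intro p _
    rw [Real.rpow_neg_one]
  have hM1 : M < ∑ p ∈ F, Real.arctan ((p : ℝ) ^ (-(1:ℝ))) := by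
    rw [hval]; linarith
  have hev : ∀ᶠ σ : ℝ in nhdsWithin (1:ℝ) (Set.Ioi 1),
      M < ∑ p ∈ F, Real.arctan ((p : ℝ) ^ (-σ)) :=
    hcont.eventually (eventually_gt_nhds hM1)
  filter_upwards [hev, self_mem_nhdsWithin] with σ h1 h2
  have h3 : ∑ p ∈ F, Real.arctan ((p : ℝ) ^ (-σ)) ≤ G σ :=
    Summable.sum_le_tsum F (fun p _ => arctan_nonneg' (x_pos σ p).le) (summable_arctan h2)
  linarith

end ZPH

/-- Fix `ε > 0`. For every `θ ∈ (-π, π]`, the set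
`{σ ∈ (1, 1+ε) : Arg(ζ_{π/2}(σ)) = θ}` is infinite. -/
theorem zetaPiHalf_arg_eq_infinitely_often
    (ε : ℝ) (hε : 0 < ε) (θ : ℝ) (hθ : θ ∈ Set.Ioc (-π) π) :
    {σ : ℝ | σ ∈ Set.Ioo 1 (1 + ε) ∧ (zetaPiHalf σ).arg = θ}.Infinite := by
  have hπ := Real.pi_pos
  set b : ℝ := 1 + ε / 2 with hbdef
  have hb1 : (1 : ℝ) < b := by simp [hbdef]; linarith
  have hbε : b < 1 + ε := by simp [hbdef]; linarith
  obtain ⟨N, hN⟩ := exists_nat_gt ((ZPH.G b - θ) / (2 * π))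
  have hNb : ZPH.G b < θ + N * (2 * π) := by
    have := (div_lt_iff₀ (by linarith : (0:ℝ) < 2 * π)).mp hN
    linarith
  have key : ∀ n : ℕ, ∃ σ : ℝ, σ ∈ Set.Ioo 1 (1 + ε) ∧ (zetaPiHalf σ).arg = θ ∧
      ZPH.G σ = θ + ((N : ℝ) + n) * (2 * π) := by
    intro n
    set t : ℝ := θ + ((N : ℝ) + n) * (2 * π) with htdef
    have htb : ZPH.G b < t := by
      have hn0 : (0:ℝ) ≤ (n : ℝ) := Nat.cast_nonneg n
      have : θ + (N : ℝ) * (2 * π) ≤ t := by rw [htdef]; nlinarith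
      linarith
    obtain ⟨a, haI, hat⟩ : ∃ a : ℝ, a ∈ Set.Ioo 1 b ∧ t < ZPH.G a := by
      have h1 : ∀ᶠ σ in nhdsWithin 1 (Set.Ioi 1), t < ZPH.G σ :=
        ZPH.tendsto_G.eventually (Filter.eventually_gt_atTop t)
      have h2 : Set.Ioo (1:ℝ) b ∈ nhdsWithin 1 (Set.Ioi 1) :=
        Ioo_mem_nhdsGT hb1
      obtain ⟨a, ha1, ha2⟩ := (h1.and (Filter.eventually_of_mem h2 (fun x hx => hx))).exists
      exact ⟨a, ha2, ha1⟩
    have hab : a ≤ b := haI.2.le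
    have hcont : ContinuousOn ZPH.G (Set.Icc a b) :=
      (ZPH.contG haI.1).mono (Set.Icc_subset_Ici_self)
    obtain ⟨σ, hσm, hσv⟩ := intermediate_value_Icc' hab hcont ⟨htb.le, hat.le⟩
    have hσ1 : 1 < σ := lt_of_lt_of_le haI.1 hσm.1
    have hσε : σ < 1 + ε := lt_of_le_of_lt hσm.2 hbε
    have hcast : ZPH.G σ = θ + (((N : ℤ) + n : ℤ) : ℝ) * (2 * π) := by
      rw [hσv, htdef]; push_cast; ring
    exact ⟨σ, ⟨hσ1, hσε⟩, ZPH.arg_zeta hσ1 hθ hcast, hσv⟩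
  choose f hf using key
  apply Set.infinite_of_injective_forall_mem (f := f)
  · intro m n hmn
    have h1 := (hf m).2.2
    have h2 := (hf n).2.2
    rw [hmn, h2] at h1
    have h3 : ((N : ℝ) + m) * (2 * π) = ((N : ℝ) + n) * (2 * π) := by linarith
    have h4 : (N : ℝ) + m = (N : ℝ) + n :=
      mul_right_cancel₀ (by positivity) h3
    have : (m : ℝ) = n := by linarith
    exact_mod_cast this
  · intro n
    exact ⟨(hf n).1, (hf n).2.1⟩
end

section
/- Fix ε > 0. There exists a continuous function φ : (1, 1 + ε) → ℝ such that ζ_{π/2}(σ) = |ζ_{π/2}(σ)|·e^{iφ(σ)} for all σ ∈ (1, 1 + ε), and φ(σ) → +∞ as σ → 1 from the right; that is, the curve σ ↦ ζ_{π/2}(σ) makes infinitely many turns around the origin as σ decreases to 1. -/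
open Filter

namespace ZPH

noncomputable def tt (σ : ℝ) (p : Nat.Primes) : ℝ := (p : ℝ) ^ (-σ)

lemma tt_pos (σ : ℝ) (p : Nat.Primes) : 0 < tt σ p :=
  Real.rpow_pos_of_pos (by exact_mod_cast p.2.pos) _

lemma one_le_p (p : Nat.Primes) : (1:ℝ) ≤ (p:ℕ) := by exact_mod_cast p.2.one_lt.le

lemma two_le_p (p : Nat.Primes) : (2:ℝ) ≤ (p:ℕ) := by exact_mod_cast p.2.two_le

lemma tt_mono {σ τ : ℝ} (h : τ ≤ σ) (p : Nat.Primes) : tt σ p ≤ tt τ p :=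
  Real.rpow_le_rpow_of_exponent_le (one_le_p p) (by linarith)

lemma tt_le_half {σ : ℝ} (hσ : 1 ≤ σ) (p : Nat.Primes) : tt σ p ≤ 1/2 := by
  have h1 : tt σ p ≤ (p:ℝ) ^ (-1 : ℝ) :=
    Real.rpow_le_rpow_of_exponent_le (one_le_p p) (by linarith)
  rw [Real.rpow_neg_one] at h1
  have h2 : ((p:ℕ):ℝ)⁻¹ ≤ 1/2 := by
    rw [one_div]
    exact inv_anti₀ (by norm_num) (two_le_p p)
  linarith

lemma zfun_eq (σ : ℝ) (p : Nat.Primes) :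
    Complex.I * (p : ℂ) ^ (-σ : ℂ) = Complex.I * ((tt σ p : ℝ) : ℂ) := by
  congr 1
  rw [tt, Complex.ofReal_cpow (by positivity : (0:ℝ) ≤ ((p:ℕ):ℝ))]
  norm_cast

lemma norm_zfun (σ : ℝ) (p : Nat.Primes) :
    ‖Complex.I * (p : ℂ) ^ (-σ : ℂ)‖ = tt σ p := by
  rw [zfun_eq, norm_mul, Complex.norm_I, one_mul, Complex.norm_real,
    Real.norm_eq_abs, abs_of_pos (tt_pos σ p)]

lemma sub_zfun_ne_zero (σ : ℝ) (p : Nat.Primes) :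
    1 - Complex.I * (p : ℂ) ^ (-σ : ℂ) ≠ 0 := by
  rw [zfun_eq]
  intro h
  have := congrArg Complex.im h
  simp at this
  exact (tt_pos σ p).ne' this

lemma log_sub_le {z : ℂ} (hz : ‖z‖ ≤ 1/2) :
    ‖Complex.log (1 - z)⁻¹ - z‖ ≤ ‖z‖^2 := by
  have h1 := Complex.norm_log_one_sub_inv_sub_self_le (z := z)
    (lt_of_le_of_lt hz (by norm_num))
  have h0 : 0 ≤ ‖z‖ := norm_nonneg z
  have h2 : (1 - ‖z‖)⁻¹ ≤ 2 := by
    rw [inv_le_comm₀ (by linarith) (by norm_num)]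
    linarith
  nlinarith [sq_nonneg ‖z‖]

lemma log_norm_le {z : ℂ} (hz : ‖z‖ ≤ 1/2) :
    ‖Complex.log (1 - z)⁻¹‖ ≤ 2 * ‖z‖ := by
  have h0 : 0 ≤ ‖z‖ := norm_nonneg z
  have h1 := log_sub_le hz
  have h3 := norm_le_norm_add_norm_sub' (Complex.log (1 - z)⁻¹) z
  nlinarith

/-- the log of the Euler factor -/
noncomputable def term (σ : ℝ) (p : Nat.Primes) : ℂ :=
  Complex.log (1 - Complex.I * (p : ℂ) ^ (-σ : ℂ))⁻¹

lemma norm_term_le {σ : ℝ} (hσ : 1 ≤ σ) (p : Nat.Primes) :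
    ‖term σ p‖ ≤ 2 * tt σ p := by
  have := log_norm_le (z := Complex.I * (p : ℂ) ^ (-σ : ℂ))
    (by rw [norm_zfun]; exact tt_le_half hσ p)
  rwa [norm_zfun] at this

lemma summable_tt {σ : ℝ} (hσ : 1 < σ) : Summable (tt σ) :=
  Nat.Primes.summable_rpow.mpr (by linarith)

lemma summable_term {σ : ℝ} (hσ : 1 < σ) : Summable (term σ) :=
  Summable.of_norm <| ((summable_tt hσ).mul_left 2).of_nonneg_of_le
    (fun _ => norm_nonneg _) (fun p => norm_term_le hσ.le p)

noncomputable def L (σ : ℝ) : ℂ := ∑' p : Nat.Primes, term σ p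

noncomputable def phi (σ : ℝ) : ℝ := (L σ).im

lemma zeta_eq {σ : ℝ} (hσ : 1 < σ) : zetaPiHalf σ = Complex.exp (L σ) := by
  have key := Complex.cexp_tsum_eq_tprod
    (f := fun (p : Nat.Primes) =>
      (1 - Complex.I * (p : ℂ) ^ (-σ : ℂ))⁻¹)
    (fun p => inv_ne_zero (sub_zfun_ne_zero _ p))
    (summable_term hσ)
  exact key.symm


lemma repr {σ : ℝ} (hσ : 1 < σ) :
    zetaPiHalf σ = (‖zetaPiHalf σ‖ : ℂ) * Complex.exp ((phi σ : ℂ) * Complex.I) := by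
  rw [zeta_eq hσ, Complex.norm_exp]
  conv_lhs => rw [← Complex.re_add_im (L σ)]
  rw [Complex.exp_add, Complex.ofReal_exp]
  rfl

lemma cont_tt (p : Nat.Primes) : Continuous fun σ : ℝ => tt σ p := by
  rw [continuous_iff_continuousAt]
  intro b
  exact (Real.continuousAt_const_rpow (by exact_mod_cast p.2.pos.ne' : ((p:ℕ):ℝ) ≠ 0)).comp
    continuous_neg.continuousAt

lemma cont_term (p : Nat.Primes) : Continuous fun σ : ℝ => term σ p := by
  have hp : ((p : Nat.Primes) : ℂ) ≠ 0 := by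
    exact_mod_cast (Nat.cast_ne_zero (R := ℂ)).mpr p.2.pos.ne'
  have hc : Continuous fun σ : ℝ => 1 - Complex.I * (p : ℂ) ^ (-σ : ℂ) := by
    apply continuous_const.sub
    exact continuous_const.mul ((Complex.continuous_ofReal.neg).const_cpow (Or.inl hp))
  rw [continuous_iff_continuousAt]
  intro σ
  refine ContinuousAt.clog (hc.continuousAt.inv₀ (sub_zfun_ne_zero σ p)) ?_
  left
  rw [Complex.inv_re]
  have hre : (1 - Complex.I * (p : ℂ) ^ (-σ : ℂ)).re = 1 := by
    rw [zfun_eq]; simp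
  rw [hre]
  have := Complex.normSq_pos.mpr (sub_zfun_ne_zero σ p)
  positivity

lemma contL : ContinuousOn L (Set.Ioi 1) := by
  intro σ0 hσ0
  rw [Set.mem_Ioi] at hσ0
  set a := (1 + σ0)/2 with ha
  have ha1 : 1 < a := by rw [ha]; linarith
  have ha2 : a < σ0 := by rw [ha]; linarith
  have hLa : ContinuousOn L (Set.Ioi a) := by
    refine continuousOn_tsum (fun p => (cont_term p).continuousOn)
      ((summable_tt ha1).mul_left 2) ?_
    intro p σ hσ
    rw [Set.mem_Ioi] at hσ
    calc ‖term σ p‖ ≤ 2 * tt σ p := norm_term_le (by linarith) p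
      _ ≤ 2 * tt a p := by have := tt_mono hσ.le p; linarith
  exact (hLa.continuousAt (Ioi_mem_nhds ha2)).continuousWithinAt

noncomputable def CC : ℝ := ∑' p : Nat.Primes, (p : ℝ) ^ (-2 : ℝ)

lemma summable_C : Summable (fun p : Nat.Primes => (p:ℝ) ^ (-2 : ℝ)) :=
  Nat.Primes.summable_rpow.mpr (by norm_num)

lemma sq_tt_le {σ : ℝ} (hσ : 1 < σ) (p : Nat.Primes) :
    tt σ p ^ 2 ≤ (p:ℝ) ^ (-2 : ℝ) := by
  have h1 : tt σ p ^ 2 = (p:ℝ) ^ (-σ * 2) := by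
    rw [tt, ← Real.rpow_natCast ((p:ℝ) ^ (-σ)) 2, ← Real.rpow_mul (by positivity)]
    norm_num
  rw [h1]
  exact Real.rpow_le_rpow_of_exponent_le (one_le_p p) (by linarith)

lemma summable_sq {σ : ℝ} (hσ : 1 < σ) : Summable (fun p => tt σ p ^ 2) :=
  summable_C.of_nonneg_of_le (fun p => sq_nonneg _) (sq_tt_le hσ)

lemma im_term_ge {σ : ℝ} (hσ : 1 < σ) (p : Nat.Primes) :
    tt σ p - tt σ p ^ 2 ≤ (term σ p).im := by
  set z := Complex.I * (p : ℂ) ^ (-σ : ℂ) with hz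
  have h1 : ‖term σ p - z‖ ≤ tt σ p ^ 2 := by
    have := log_sub_le (z := z) (by rw [hz, norm_zfun]; exact tt_le_half hσ.le p)
    rwa [hz, norm_zfun] at this
  have h2 : |(term σ p - z).im| ≤ ‖term σ p - z‖ := Complex.abs_im_le_norm _
  have h3 : (term σ p - z).im = (term σ p).im - tt σ p := by
    rw [Complex.sub_im, hz, zfun_eq]
    simp
  rw [h3] at h2
  have := (abs_le.mp (h2.trans h1)).1
  linarith

lemma phi_ge {σ : ℝ} (hσ : 1 < σ) : (∑' p, tt σ p) - CC ≤ phi σ := by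
  have hsum := summable_term hσ
  have him : Summable fun p => (term σ p).im := ⟨_, Complex.hasSum_im hsum.hasSum⟩
  have h1 : phi σ = ∑' p, (term σ p).im := Complex.im_tsum hsum
  have h2 : ∑' p, (tt σ p - tt σ p ^ 2) ≤ ∑' p, (term σ p).im :=
    Summable.tsum_le_tsum (im_term_ge hσ) ((summable_tt hσ).sub (summable_sq hσ)) him
  rw [Summable.tsum_sub (summable_tt hσ) (summable_sq hσ)] at h2
  have h4 : ∑' p, tt σ p ^ 2 ≤ CC :=
    Summable.tsum_le_tsum (sq_tt_le hσ) (summable_sq hσ) summable_C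
  rw [h1]
  linarith

end ZPH

/-- Fix `ε > 0`. There is a continuous argument function `φ` of `ζ_{π/2}` on
`(1, 1+ε)` with `φ(σ) → +∞` as `σ → 1⁺`: the curve `σ ↦ ζ_{π/2}(σ)` makes
infinitely many turns around the origin as `σ` decreases to `1`. -/
theorem zetaPiHalf_infinitely_many_turns (ε : ℝ) (hε : 0 < ε) :
    ∃ φ : ℝ → ℝ, ContinuousOn φ (Set.Ioo 1 (1 + ε)) ∧
      (∀ σ ∈ Set.Ioo 1 (1 + ε),
        zetaPiHalf σ = (‖zetaPiHalf σ‖ : ℂ) * Complex.exp ((φ σ : ℂ) * Complex.I)) ∧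
      Tendsto φ (nhdsWithin 1 (Set.Ioo 1 (1 + ε))) atTop := by
  refine ⟨ZPH.phi, ?_, fun σ hσ => ZPH.repr hσ.1, ?_⟩
  · exact (Complex.continuous_im.comp_continuousOn ZPH.contL).mono
      (fun σ hσ => hσ.1)
  · rw [tendsto_atTop]
    intro M
    obtain ⟨F, hF⟩ : ∃ F : Finset Nat.Primes, M + ZPH.CC < ∑ p ∈ F, ((p:ℕ):ℝ)⁻¹ := by
      by_contra h
      push_neg at h
      apply Nat.Primes.not_summable_one_div
      have : Summable fun p : Nat.Primes => ((p:ℕ):ℝ)⁻¹ :=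
        summable_of_sum_le (fun p => by positivity) h
      simpa [one_div] using this
    have hg : ContinuousAt (fun σ => ∑ p ∈ F, ZPH.tt σ p) 1 :=
      (continuous_finset_sum F fun p _ => ZPH.cont_tt p).continuousAt
    have h1 : ∑ p ∈ F, ZPH.tt 1 p = ∑ p ∈ F, ((p:ℕ):ℝ)⁻¹ := by
      refine Finset.sum_congr rfl fun p _ => ?_
      rw [ZPH.tt, Real.rpow_neg_one]
    have hev1 : ∀ᶠ σ in nhdsWithin 1 (Set.Ioo 1 (1+ε)), M + ZPH.CC ≤ ∑ p ∈ F, ZPH.tt σ p :=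
      (hg.tendsto.mono_left nhdsWithin_le_nhds).eventually
        (eventually_ge_nhds (by rw [h1]; exact hF))
    filter_upwards [hev1, self_mem_nhdsWithin] with σ h2 h3
    have hσ : 1 < σ := h3.1
    have h4 : ∑ p ∈ F, ZPH.tt σ p ≤ ∑' p, ZPH.tt σ p :=
      Summable.sum_le_tsum F (fun p _ => (ZPH.tt_pos σ p).le) (ZPH.summable_tt hσ)
    linarith [ZPH.phi_ge hσ]
end

section
/- There exists a real number σ_π > 1 such that for every completely multiplicative a : ℕ → ℂ with |a(p)| = 1 at all primes p, and every s ∈ ℂ with Re s > σ_π, the value S_a(s) is not a nonpositive real number (that is, it is never the case that Im S_a(s) = 0 and Re S_a(s) ≤ 0). In particular, no function equivalent to the Riemann zeta function takes negative real values on the half-plane Re s > σ_π. -/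
open Real

lemma norm_a_eq_one (a : ℕ → ℂ) (h1 : a 1 = 1)
    (hmul : ∀ m n : ℕ, m ≠ 0 → n ≠ 0 → a (m * n) = a m * a n)
    (hp : ∀ p : ℕ, p.Prime → ‖a p‖ = 1) :
    ∀ n : ℕ, n ≠ 0 → ‖a n‖ = 1 := by
  intro n
  induction n using Nat.strong_induction_on with
  | _ n ih =>
    intro hn
    rcases eq_or_ne n 1 with rfl | hn1
    · simp [h1]
    · obtain ⟨p, hp', hpd⟩ := Nat.exists_prime_and_dvd hn1
      obtain ⟨m, rfl⟩ := hpd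
      have hm : m ≠ 0 := by rintro rfl; simp at hn
      have hmlt : m < p * m :=
        lt_mul_of_one_lt_left (Nat.pos_of_ne_zero hm) hp'.one_lt
      rw [hmul p m hp'.pos.ne' hm, norm_mul, hp p hp', ih m hmlt hm, one_mul]

lemma tail_hasSum : HasSum (fun n : ℕ => (1 : ℝ) / ((n : ℝ) + 2) ^ 2) (π ^ 2 / 6 - 1) := by
  have h := hasSum_zeta_two
  have h2 := (hasSum_nat_add_iff' (f := fun n : ℕ => (1 : ℝ) / (n : ℝ) ^ 2) 2).mpr h
  simp only [Finset.sum_range_succ, Finset.sum_range_zero] at h2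
  norm_num at h2
  simpa [one_div] using h2

/-- There exists `σ_π > 1` such that for every completely multiplicative `a`
with `|a(p)| = 1` at all primes, and every `s` with `Re s > σ_π`, the value
`S_a(s)` is not a nonpositive real number. -/
theorem exists_abscissa_not_nonpos_real :
    ∃ σπ : ℝ, 1 < σπ ∧
      ∀ a : ℕ → ℂ, a 1 = 1 →
        (∀ m n : ℕ, m ≠ 0 → n ≠ 0 → a (m * n) = a m * a n) →
        (∀ p : ℕ, p.Prime → ‖a p‖ = 1) →
        ∀ s : ℂ, σπ < s.re →
          ¬((LSeries a s).im = 0 ∧ (LSeries a s).re ≤ 0) := by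
  refine ⟨2, one_lt_two, ?_⟩
  intro a h1 hmul hp s hs
  have hna := norm_a_eq_one a h1 hmul hp
  set f := LSeries.term a s with hf
  -- norm bound on shifted terms
  have hbound : ∀ n : ℕ, ‖f (n + 2)‖ ≤ 1 / ((n : ℝ) + 2) ^ 2 := by
    intro n
    have hpos : (0 : ℝ) < (n : ℝ) + 2 := by positivity
    have hne : n + 2 ≠ 0 := by omega
    rw [hf, LSeries.term_of_ne_zero hne, norm_div,
      hna _ hne]
    have hnorm : ‖((n + 2 : ℕ) : ℂ) ^ s‖ = ((n : ℝ) + 2) ^ s.re := by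
      rw [Complex.norm_natCast_cpow_of_pos (by omega)]
      push_cast
      ring_nf
    rw [hnorm]
    have h1le : (1 : ℝ) ≤ (n : ℝ) + 2 := by linarith [Nat.cast_nonneg (α := ℝ) n]
    have : ((n : ℝ) + 2) ^ (2 : ℝ) ≤ ((n : ℝ) + 2) ^ s.re :=
      Real.rpow_le_rpow_of_exponent_le h1le hs.le
    rw [show ((n : ℝ) + 2) ^ (2 : ℕ) = ((n : ℝ) + 2) ^ (2 : ℝ) by
      rw [← Real.rpow_natCast]; norm_num]
    apply div_le_div_of_nonneg_left one_pos.le (by positivity) this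
  -- summability
  have hsum2 : Summable (fun n : ℕ => f (n + 2)) := by
    apply Summable.of_norm
    exact Summable.of_nonneg_of_le (fun n => norm_nonneg _) hbound tail_hasSum.summable
  have hsumf : Summable f := by
    rwa [← summable_nat_add_iff 2]
  -- values of first terms
  have hf0 : f 0 = 0 := LSeries.term_zero a s
  have hf1 : f 1 = 1 := by
    rw [hf, LSeries.term_of_ne_zero one_ne_zero, h1]
    simp
  -- split the sum
  have hLs : LSeries a s = 1 + ∑' n : ℕ, f (n + 2) := by
    rw [LSeries, ← hf]
    rw [Summable.tsum_eq_zero_add hsumf, Summable.tsum_eq_zero_add (by rwa [← summable_nat_add_iff 1] at hsumf)]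
    simp only [hf0, hf1, zero_add]
  -- bound the tail
  have htail : ‖∑' n : ℕ, f (n + 2)‖ < 1 := by
    calc ‖∑' n : ℕ, f (n + 2)‖ ≤ ∑' n : ℕ, (1 : ℝ) / ((n : ℝ) + 2) ^ 2 :=
          tsum_of_norm_bounded tail_hasSum.summable.hasSum hbound
      _ = π ^ 2 / 6 - 1 := tail_hasSum.tsum_eq
      _ < 1 := by nlinarith [Real.pi_lt_d2, Real.pi_gt_three]
  rintro ⟨_, hre⟩
  have : ‖LSeries a s - 1‖ < 1 := by rw [hLs]; simpa using htail
  have := Complex.abs_re_le_norm (LSeries a s - 1)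
  simp only [Complex.sub_re, Complex.one_re] at this
  have : |(LSeries a s).re - 1| < 1 := lt_of_le_of_lt this ‹_›
  rw [abs_lt] at this
  linarith
end
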